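/- Let f : ℕ → ℕ → ℕ satisfy (BASE2) f 2 n ≤ n/2 for all n ≥ 2, (SIMPLEX) f d d = 0 for all d ≥ 3, (LOW) f d n ≤ f (d−1) (n−1) whenever 2 < d ≤ n < 2d, (KK) f d n ≤ f (d−1) (n−1) + 2·f d (n/2) + 2 whenever d ≥ 3 and n ≥ 2d, and (LIN) f d n ≤ 2^(d−3)·n for all n ≥ d ≥ 3. Then for all n > d ≥ 4, (f d n : ℝ) ≤ (n − d)^(log₂ d). -/

import Mathlib

open Real

private lemma logb_ge_div {x : ℝ} (p q : ℕ) (hq : 0 < q) (hx : 1 ≤ x)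
    (h : (2:ℝ)^p ≤ x^q) : (p : ℝ)/(q : ℝ) ≤ Real.logb 2 x := by
  have hx0 : (0:ℝ) < x := lt_of_lt_of_le one_pos hx
  rw [Real.logb, div_le_div_iff₀ (by exact_mod_cast hq) (Real.log_pos one_lt_two)]
  have h2 : Real.log ((2:ℝ)^p) ≤ Real.log (x^q) := Real.log_le_log (by positivity) h
  rw [Real.log_pow, Real.log_pow] at h2
  linarith

private lemma logb_le_div {x : ℝ} (p q : ℕ) (hq : 0 < q) (hx : 0 < x)
    (h : x^q ≤ (2:ℝ)^p) : Real.logb 2 x ≤ (p : ℝ)/(q : ℝ) := by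
  rw [Real.logb, div_le_div_iff₀ (Real.log_pos one_lt_two) (by exact_mod_cast hq)]
  have h2 : Real.log (x^q) ≤ Real.log ((2:ℝ)^p) := Real.log_le_log (by positivity) h
  rw [Real.log_pow, Real.log_pow] at h2
  linarith

private lemma le_rpow_div {x r : ℝ} (p q : ℕ) (hq : 0 < q) (hx : 0 ≤ x) (hr : 0 ≤ r)
    (h : r^q ≤ x^p) : r ≤ x^((p:ℝ)/(q:ℝ)) := by
  have h1 : x^((p:ℝ)/(q:ℝ)) = (x^(p:ℕ))^((1:ℝ)/q) := by
    rw [← Real.rpow_natCast x p, ← Real.rpow_mul hx]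
    ring_nf
  have h2 : r = (r^(q:ℕ))^((1:ℝ)/q) := by
    rw [← Real.rpow_natCast r q, ← Real.rpow_mul hr, mul_one_div,
      div_self (by exact_mod_cast hq.ne' : (q:ℝ) ≠ 0), Real.rpow_one]
  rw [h1]
  calc r = (r^(q:ℕ))^((1:ℝ)/q) := h2
    _ ≤ (x^(p:ℕ))^((1:ℝ)/q) := Real.rpow_le_rpow (by positivity) h (by positivity)

private lemma b_lb : (19:ℝ)/12 ≤ Real.logb 2 3 :=
  logb_ge_div 19 12 (by norm_num) (by norm_num) (by norm_num)

private lemma b_ub : Real.logb 2 3 ≤ (8:ℝ)/5 :=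
  logb_le_div 8 5 (by norm_num) (by norm_num) (by norm_num)

private lemma a_lb : (65:ℝ)/28 ≤ Real.logb 2 5 :=
  logb_ge_div 65 28 (by norm_num) (by norm_num) (by norm_num)

private lemma a_ub : Real.logb 2 5 ≤ (233:ℝ)/100 :=
  logb_le_div 233 100 (by norm_num) (by norm_num) (by norm_num)

private lemma c_lb : (14:ℝ)/5 ≤ Real.logb 2 7 :=
  logb_ge_div 14 5 (by norm_num) (by norm_num) (by norm_num)

private lemma logb24 : Real.logb 2 4 = 2 := by
  rw [show (4:ℝ) = 2^(2:ℕ) by norm_num, Real.logb_pow, Real.logb_self_eq_one (by norm_num : (1:ℝ) < 2)]; norm_num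

private lemma logb24' : Real.logb 2 4 = 2 := by
  rw [show (4:ℝ) = 2^(2:ℝ) by norm_num [Real.rpow_natCast]]
  exact Real.logb_rpow (by norm_num) (by norm_num)

private lemma logb26 : Real.logb 2 6 = 1 + Real.logb 2 3 := by
  rw [show (6:ℝ) = 2*3 by norm_num, Real.logb_mul (by norm_num) (by norm_num),
    Real.logb_self_eq_one (by norm_num : (1:ℝ) < 2)]

private lemma K_red {d : ℝ} (hd : 3 ≤ d)
    (h : Real.logb 2 d - Real.logb 2 (d-2) ≤
         Real.logb 2 d * (Real.logb 2 d - Real.logb 2 (d-1))) :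
    (d-1)^(Real.logb 2 d) ≤ (1 - 2/d)*d^(Real.logb 2 d) := by
  set A := Real.logb 2 d with hA
  set B := Real.logb 2 (d-1) with hB
  set C := Real.logb 2 (d-2) with hC
  have h20 : (0:ℝ) < 2 := by norm_num
  have h21 : (2:ℝ) ≠ 1 := by norm_num
  have hd0 : (0:ℝ) < d := by linarith
  have hd1 : (0:ℝ) < d - 1 := by linarith
  have hd2 : (0:ℝ) < d - 2 := by linarith
  have e1 : d - 1 = 2^B := (Real.rpow_logb h20 h21 hd1).symm
  have e2 : d = 2^A := (Real.rpow_logb h20 h21 hd0).symm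
  have e3 : d - 2 = 2^C := (Real.rpow_logb h20 h21 hd2).symm
  have goal2 : (2:ℝ)^(B*A) ≤ 2^(C - A + A*A) := by
    apply Real.rpow_le_rpow_of_exponent_le (by norm_num)
    nlinarith [h]
  calc (d-1)^A = (2^B)^A := by rw [← e1]
    _ = 2^(B*A) := by rw [← Real.rpow_mul (by norm_num)]
    _ ≤ 2^(C - A + A*A) := goal2
    _ = 2^C / 2^A * (2^A)^A := by
        rw [← Real.rpow_mul (by norm_num : (0:ℝ) ≤ 2), div_eq_mul_inv,
          ← Real.rpow_neg (by norm_num : (0:ℝ) ≤ 2), ← Real.rpow_add h20,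
          ← Real.rpow_add h20]
        ring_nf
    _ = (1 - 2/d)*d^A := by
        rw [← e2, ← e3]
        congr 1
        field_simp

private lemma K5 : ((5:ℝ)-1)^(Real.logb 2 5) ≤ (1 - 2/5)*(5:ℝ)^(Real.logb 2 5) := by
  apply K_red (by norm_num)
  have h1 : ((5:ℝ)-1) = 4 := by norm_num
  have h2 : ((5:ℝ)-2) = 3 := by norm_num
  rw [h1, h2, logb24']
  nlinarith [a_lb, b_lb, mul_nonneg (by linarith [a_lb] : (0:ℝ) ≤ Real.logb 2 5 - 65/28)
    (by linarith [a_lb] : (0:ℝ) ≤ Real.logb 2 5 - 19/28)]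

private lemma K6 : ((6:ℝ)-1)^(Real.logb 2 6) ≤ (1 - 2/6)*(6:ℝ)^(Real.logb 2 6) := by
  apply K_red (by norm_num)
  have h1 : ((6:ℝ)-1) = 5 := by norm_num
  have h2 : ((6:ℝ)-2) = 4 := by norm_num
  rw [h1, h2, logb24', logb26]
  nlinarith [a_ub, b_lb, mul_nonneg (by linarith [b_lb] : (0:ℝ) ≤ Real.logb 2 3 - 19/12)
    (by linarith [a_ub] : (0:ℝ) ≤ 233/100 - Real.logb 2 5)]

private lemma K7 : ((7:ℝ)-1)^(Real.logb 2 7) ≤ (1 - 2/7)*(7:ℝ)^(Real.logb 2 7) := by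
  apply K_red (by norm_num)
  have h1 : ((7:ℝ)-1) = 6 := by norm_num
  have h2 : ((7:ℝ)-2) = 5 := by norm_num
  rw [h1, h2, logb26]
  nlinarith [a_lb, b_ub, c_lb,
    mul_nonneg (by linarith [c_lb] : (0:ℝ) ≤ Real.logb 2 7 - 14/5)
      (by linarith [c_lb, b_ub] : (0:ℝ) ≤ Real.logb 2 7 + 14/5 - 2 - Real.logb 2 3),
    mul_nonneg (by linarith [c_lb] : (0:ℝ) ≤ Real.logb 2 7 - 14/5)
      (by linarith [b_ub] : (0:ℝ) ≤ 8/5 - Real.logb 2 3)]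

private lemma K8 {x : ℝ} (hx : 8 ≤ x) :
    (x-1)^(Real.logb 2 x) ≤ (1 - 2/x)*x^(Real.logb 2 x) := by
  apply K_red (by linarith)
  have hx0 : (0:ℝ) < x := by linarith
  have hx1 : (0:ℝ) < x - 1 := by linarith
  have hx2 : (0:ℝ) < x - 2 := by linarith
  have ht : (0:ℝ) < Real.log 2 := Real.log_pos one_lt_two
  set t := Real.log 2
  set u := Real.log x with hu
  set v := Real.log (x-1) with hv
  set w := Real.log (x-2) with hw
  -- u - v ≥ 1/x
  have e1 : 1/x ≤ u - v := by
    have := Real.log_le_sub_one_of_pos (show (0:ℝ) < (x-1)/x by positivity)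
    rw [Real.log_div hx1.ne' hx0.ne'] at this
    have hx' : (x-1)/x - 1 = -(1/x) := by field_simp; ring
    rw [hx'] at this
    linarith
  -- u - w ≤ 2/(x-2)
  have e2 : u - w ≤ 2/(x-2) := by
    have := Real.log_le_sub_one_of_pos (show (0:ℝ) < x/(x-2) by positivity)
    rw [Real.log_div hx0.ne' hx2.ne'] at this
    have hx' : x/(x-2) - 1 = 2/(x-2) := by field_simp; ring
    rw [hx'] at this
    linarith
  -- u ≥ 3t
  have e3 : 3*t ≤ u := by
    have h8 : Real.log 8 ≤ u := Real.log_le_log (by norm_num) hx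
    have : Real.log 8 = 3*t := by
      rw [show (8:ℝ) = 2^(3:ℕ) by norm_num, Real.log_pow]
      push_cast; ring
    linarith
  have hupos : 0 < u := lt_of_lt_of_le (by positivity) e3
  have e4 : 3*t*(1/x) ≤ u*(u-v) := by
    apply mul_le_mul e3 e1 (by positivity) hupos.le
  have e5 : (u-w)*t ≤ 3*t*(1/x) := by
    have h1 : (u-w)*t ≤ (2/(x-2))*t := mul_le_mul_of_nonneg_right e2 ht.le
    have h2 : (2/(x-2))*t ≤ (3/x)*t := by
      apply mul_le_mul_of_nonneg_right _ ht.le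
      rw [div_le_div_iff₀ hx2 hx0]
      nlinarith
    calc (u-w)*t ≤ (2/(x-2))*t := h1
      _ ≤ (3/x)*t := h2
      _ = 3*t*(1/x) := by ring
  have key : (u-w)*t ≤ u*(u-v) := le_trans e5 e4
  show Real.logb 2 x - Real.logb 2 (x-2) ≤ Real.logb 2 x * (Real.logb 2 x - Real.logb 2 (x-1))
  rw [Real.logb, Real.logb, Real.logb, ← hu, ← hv, ← hw]
  have lhs : u/t - w/t = (u-w)/t := by ring
  have rhs : u/t * (u/t - v/t) = (u*(u-v))/t^2 := by ring
  rw [lhs, rhs, div_le_div_iff₀ ht (by positivity)]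
  nlinarith [mul_le_mul_of_nonneg_right key ht.le]

private lemma Kd (d : ℕ) (hd : 5 ≤ d) :
    ((d:ℝ)-1)^(Real.logb 2 d) ≤ (1 - 2/(d:ℝ))*(d:ℝ)^(Real.logb 2 d) := by
  rcases Nat.lt_or_ge d 8 with h8 | h8
  · interval_cases d
    · exact_mod_cast K5
    · exact_mod_cast K6
    · exact_mod_cast K7
  · exact K8 (by exact_mod_cast h8)

private lemma Rstep5 (d : ℕ) (hd : 5 ≤ d) {m : ℝ} (hm : (d:ℝ) ≤ m) :
    m ^ (Real.logb 2 ((d:ℝ) - 1)) + 2 * ((m - d)/2) ^ (Real.logb 2 d) + 2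
      ≤ m ^ (Real.logb 2 d) := by
  set L := Real.logb 2 (d:ℝ) with hL
  set L' := Real.logb 2 ((d:ℝ)-1) with hL'
  have hd5 : (5:ℝ) ≤ (d:ℝ) := by exact_mod_cast hd
  have hd0 : (0:ℝ) < d := by linarith
  have hm0 : (0:ℝ) < m := by linarith
  have hm1 : (1:ℝ) ≤ m := by linarith
  have hL2 : (2:ℝ) ≤ L := by
    have h := Real.logb_le_logb_of_le one_lt_two (by norm_num : (0:ℝ) < 4)
      (by linarith : (4:ℝ) ≤ (d:ℝ))
    rw [logb24'] at h
    exact h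
  have hL'0 : (0:ℝ) ≤ L' := Real.logb_nonneg one_lt_two (by linarith)
  have hL'L : L' ≤ L := Real.logb_le_logb_of_le one_lt_two (by linarith) (by linarith)
  have h2L : (2:ℝ)^L = d := Real.rpow_logb (by norm_num) (by norm_num) hd0
  have hmd : (0:ℝ) ≤ m - d := by linarith
  set X := m^L with hX
  set Y := m^L' with hY
  set Z := m^(L-1) with hZ
  have hXpos : 0 < X := Real.rpow_pos_of_pos hm0 _
  have hYpos : 0 < Y := Real.rpow_pos_of_pos hm0 _
  have hZ1 : (1:ℝ) ≤ Z := Real.one_le_rpow hm1 (by linarith)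
  have stepA : 2 * ((m - d)/2) ^ L = 2 * (m-d)^L / d := by
    rw [Real.div_rpow hmd (by norm_num : (0:ℝ) ≤ 2), h2L]
    ring
  have stepB : (m-d)^L ≤ Z * (m-d) := by
    rcases eq_or_lt_of_le hm with heq | hlt
    · rw [← heq]
      simp [Real.zero_rpow (by linarith : L ≠ 0)]
    · have hmd0 : (0:ℝ) < m - d := by linarith
      have e : (m-d)^L = (m-d)^(L-1) * (m-d) := by
        rw [← Real.rpow_add_one hmd0.ne']
        ring_nf
      rw [e]
      apply mul_le_mul_of_nonneg_right _ hmd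
      exact Real.rpow_le_rpow hmd0.le (by linarith) (by linarith)
  have stepC : Z * m = X := by
    rw [hZ, hX, ← Real.rpow_add_one hm0.ne']
    ring_nf
  have hdL : (0:ℝ) < (d:ℝ)^(L-L') := Real.rpow_pos_of_pos hd0 _
  have hdLL : (0:ℝ) < (d:ℝ)^L := Real.rpow_pos_of_pos hd0 _
  have stepD : Y * (d:ℝ)^(L-L') ≤ X := by
    have h1 : (d:ℝ)^(L-L') ≤ m^(L-L') :=
      Real.rpow_le_rpow hd0.le hm (by linarith)
    have h2 : Y * m^(L-L') = X := by
      rw [hY, hX, ← Real.rpow_add hm0]; ring_nf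
    calc Y * (d:ℝ)^(L-L') ≤ Y * m^(L-L') :=
          mul_le_mul_of_nonneg_left h1 hYpos.le
      _ = X := h2
  have stepK : ((d:ℝ)-1)^L ≤ (1 - 2/(d:ℝ))*(d:ℝ)^L := Kd d hd
  have stepE : (d:ℝ)^L' = ((d:ℝ)-1)^L := by
    have e1 : (d:ℝ) = 2^L := h2L.symm
    have e2 : ((d:ℝ)-1) = 2^L' := (Real.rpow_logb (by norm_num) (by norm_num) (by linarith)).symm
    rw [e2]
    nth_rewrite 1 [e1]
    rw [← Real.rpow_mul (by norm_num : (0:ℝ) ≤ 2),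
      ← Real.rpow_mul (by norm_num : (0:ℝ) ≤ 2), mul_comm]
  have h12d : (0:ℝ) ≤ 1 - 2/(d:ℝ) := by
    rw [sub_nonneg, div_le_one hd0]; linarith
  have h3 : (d:ℝ)^L' * (d:ℝ)^(L-L') = (d:ℝ)^L := by
    rw [← Real.rpow_add hd0]; ring_nf
  have h7 : (d:ℝ)^L ≤ (1 - 2/(d:ℝ))*(d:ℝ)^L * (d:ℝ)^(L-L') := by
    calc (d:ℝ)^L = (d:ℝ)^L' * (d:ℝ)^(L-L') := h3.symm
      _ = ((d:ℝ)-1)^L * (d:ℝ)^(L-L') := by rw [stepE]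
      _ ≤ (1 - 2/(d:ℝ))*(d:ℝ)^L * (d:ℝ)^(L-L') :=
          mul_le_mul_of_nonneg_right stepK hdL.le
  have h8 : Y * (d:ℝ)^L ≤ ((1 - 2/(d:ℝ))*X) * (d:ℝ)^L := by
    calc Y * (d:ℝ)^L ≤ Y * ((1 - 2/(d:ℝ))*(d:ℝ)^L * (d:ℝ)^(L-L')) :=
          mul_le_mul_of_nonneg_left h7 hYpos.le
      _ = (1 - 2/(d:ℝ))*(d:ℝ)^L*(Y*(d:ℝ)^(L-L')) := by ring
      _ ≤ (1 - 2/(d:ℝ))*(d:ℝ)^L*X := by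
          apply mul_le_mul_of_nonneg_left stepD
          positivity
      _ = ((1 - 2/(d:ℝ))*X) * (d:ℝ)^L := by ring
  have stepF : Y ≤ X - 2*X/d := by
    have := le_of_mul_le_mul_right h8 hdLL
    calc Y ≤ (1 - 2/(d:ℝ))*X := this
      _ = X - 2*X/d := by ring
  have hmid : 2 * ((m - d)/2) ^ L ≤ 2*X/d - 2*Z := by
    rw [stepA]
    have h9 : 2*(m-d)^L ≤ 2*(Z*(m-d)) := by linarith
    have h10 : 2*(m-d)^L/d ≤ 2*(Z*(m-d))/d := (div_le_div_iff_of_pos_right hd0).mpr h9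
    have h11 : 2*(Z*(m-d))/d = 2*(Z*m)/d - 2*Z := by
      field_simp
    rw [stepC] at h11
    linarith
  linarith [hmid, stepF, hZ1]

private lemma Rstep4 {m : ℝ} (hm : (4:ℝ) ≤ m) :
    m ^ (Real.logb 2 3) + 2 * ((m - 4)/2) ^ (Real.logb 2 4) + 2
      ≤ m ^ (Real.logb 2 4) := by
  rw [logb24']
  have hm0 : (0:ℝ) < m := by linarith
  have h2 : ∀ x : ℝ, 0 ≤ x → x ^ (2:ℝ) = x^(2:ℕ) := fun x hx => by
    rw [← Real.rpow_natCast x 2]; norm_num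
  rw [h2 m (by linarith), h2 _ (by linarith)]
  -- m^(logb 2 3) ≤ m^(8/5)
  have hb : m ^ (Real.logb 2 3) ≤ m ^ ((8:ℝ)/5) :=
    Real.rpow_le_rpow_of_exponent_le (by linarith) b_ub
  have hsplit : m ^ ((8:ℝ)/5) * m ^ ((2:ℝ)/5) = m^(2:ℕ) := by
    rw [← Real.rpow_add hm0, ← h2 m (by linarith)]
    norm_num
  rcases le_total m 6 with h6 | h6
  · -- 4 ≤ m ≤ 6 : m^(2/5) ≥ 4^(2/5) ≥ 12/7
    have h1 : (12:ℝ)/7 ≤ m ^ ((2:ℝ)/5) := by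
      calc (12:ℝ)/7 ≤ (4:ℝ) ^ ((2:ℝ)/5) := by
            apply le_rpow_div 2 5 (by norm_num) (by norm_num) (by norm_num)
            norm_num
        _ ≤ m ^ ((2:ℝ)/5) := Real.rpow_le_rpow (by norm_num) hm (by norm_num)
    have h85 : m ^ ((8:ℝ)/5) ≤ (7:ℝ)/12 * m^(2:ℕ) := by
      have hp : (0:ℝ) < m ^ ((8:ℝ)/5) := Real.rpow_pos_of_pos hm0 _
      nlinarith [hsplit, h1, hp]
    nlinarith [hb, h85, hm, h6]
  · -- m ≥ 6 : m^(2/5) ≥ 2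
    have h1 : (2:ℝ) ≤ m ^ ((2:ℝ)/5) := by
      calc (2:ℝ) ≤ (6:ℝ) ^ ((2:ℝ)/5) := by
            apply le_rpow_div 2 5 (by norm_num) (by norm_num) (by norm_num)
            norm_num
        _ ≤ m ^ ((2:ℝ)/5) := Real.rpow_le_rpow (by norm_num) h6 (by norm_num)
    have h85 : m ^ ((8:ℝ)/5) ≤ m^(2:ℕ)/2 := by
      have hp : (0:ℝ) < m ^ ((8:ℝ)/5) := Real.rpow_pos_of_pos hm0 _
      nlinarith [hsplit, h1, hp]
    nlinarith [hb, h85, h6]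

private lemma Rstep (d : ℕ) (hd : 4 ≤ d) {m : ℝ} (hm : (d:ℝ) ≤ m) :
    m ^ (Real.logb 2 ((d:ℝ) - 1)) + 2 * ((m - d)/2) ^ (Real.logb 2 d) + 2
      ≤ m ^ (Real.logb 2 d) := by
  rcases eq_or_lt_of_le hd with h4 | h5
  · subst h4
    have : ((4:ℕ):ℝ) = (4:ℝ) := by norm_num
    rw [this] at hm ⊢
    have h3 : ((4:ℝ) - 1) = 3 := by norm_num
    rw [h3]
    exact Rstep4 hm
  · exact Rstep5 d h5 hm



/-- Tail-quasipolynomial bound for normal simplicial complexes: if `f`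
satisfies the 2-dimensional base case `⌊n/2⌋`, the boundary base case, the
low-vertex dimension reduction, the Kalai–Kleitman recursion, and the
Labbé–Manneville–Santos bound `2^(d-3) n`, then
`f d n ≤ (n - d) ^ log₂ d` for all `n > d ≥ 4`. -/
theorem normal_complexes_quasipolynomial_bound
    (f : ℕ → ℕ → ℕ)
    (base2 : ∀ n, 2 ≤ n → f 2 n ≤ n / 2)
    (simplex : ∀ d, 3 ≤ d → f d d = 0)
    (low : ∀ d n, 2 < d → d ≤ n → n < 2 * d → f d n ≤ f (d - 1) (n - 1))
    (kk : ∀ d n, 3 ≤ d → 2 * d ≤ n →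
      f d n ≤ f (d - 1) (n - 1) + 2 * f d (n / 2) + 2)
    (lin : ∀ d n, 3 ≤ d → d ≤ n → f d n ≤ 2 ^ (d - 3) * n) :
    ∀ d n, 4 ≤ d → d < n →
      (f d n : ℝ) ≤ ((n : ℝ) - (d : ℝ)) ^ (Real.logb 2 (d : ℝ)) := by
  have key : ∀ n d : ℕ, 3 ≤ d → d ≤ n →
      (f d n : ℝ) ≤ ((n : ℝ) - (d : ℝ)) ^ (Real.logb 2 (d : ℝ)) := by
    intro n
    induction n using Nat.strong_induction_on with
    | _ n ih =>
    intro d hd3 hdn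
    rcases eq_or_lt_of_le hd3 with h3 | hd4
    · -- d = 3
      subst h3
      have hc3 : ((3:ℕ):ℝ) = (3:ℝ) := by norm_num
      rw [hc3]
      rcases Nat.lt_or_ge n 7 with h7 | h7
      · interval_cases n
        · -- n = 3
          rw [simplex 3 le_rfl]
          push_cast
          apply Real.rpow_nonneg
          norm_num
        · -- n = 4
          have h1 : f 3 4 ≤ 1 := by
            have ha := low 3 4 (by norm_num) (by norm_num) (by norm_num)
            have hb := base2 3 (by norm_num)
            norm_num at ha
            omega
          calc (f 3 4 : ℝ) ≤ 1 := by exact_mod_cast h1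
            _ = ((4:ℕ):ℝ) - 3 := by norm_num
            _ ≤ (((4:ℕ):ℝ) - 3) ^ (Real.logb 2 3) := by
                norm_num [Real.one_rpow]
        · -- n = 5
          have h1 : f 3 5 ≤ 2 := by
            have ha := low 3 5 (by norm_num) (by norm_num) (by norm_num)
            have hb := base2 4 (by norm_num)
            norm_num at ha
            omega
          calc (f 3 5 : ℝ) ≤ 2 := by exact_mod_cast h1
            _ = (2:ℝ) ^ (1:ℝ) := by rw [Real.rpow_one]
            _ ≤ (2:ℝ) ^ (Real.logb 2 3) := by
                apply Real.rpow_le_rpow_of_exponent_le (by norm_num)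
                linarith [b_lb]
            _ = (((5:ℕ):ℝ) - 3) ^ (Real.logb 2 3) := by norm_num
        · -- n = 6
          have h1 : f 3 6 ≤ 4 := by
            have ha := kk 3 6 (by norm_num) (by norm_num)
            have hb := base2 5 (by norm_num)
            have hc := simplex 3 le_rfl
            norm_num [hc] at ha
            omega
          calc (f 3 6 : ℝ) ≤ 4 := by exact_mod_cast h1
            _ ≤ (3:ℝ) ^ ((19:ℝ)/12) := by
                apply le_rpow_div 19 12 (by norm_num) (by norm_num) (by norm_num)
                norm_num
            _ ≤ (3:ℝ) ^ (Real.logb 2 3) :=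
                Real.rpow_le_rpow_of_exponent_le (by norm_num) b_lb
            _ = (((6:ℕ):ℝ) - 3) ^ (Real.logb 2 3) := by norm_num
      · -- n ≥ 7
        have h1 : f 3 n ≤ n := by
          have := lin 3 n le_rfl (by omega)
          simpa using this
        have hn7 : (7:ℝ) ≤ (n:ℝ) := by exact_mod_cast h7
        have hx4 : (4:ℝ) ≤ (n:ℝ) - 3 := by linarith
        calc (f 3 n : ℝ) ≤ (n:ℝ) := by exact_mod_cast h1
          _ ≤ ((n:ℝ) - 3) ^ ((3:ℝ)/2) := by
              apply le_rpow_div 3 2 (by norm_num) (by linarith) (by linarith)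
              nlinarith [mul_nonneg (by linarith : (0:ℝ) ≤ (n:ℝ) - 7)
                (by nlinarith [sq_nonneg ((n:ℝ) - 3/2)] :
                  (0:ℝ) ≤ (n:ℝ)^2 - 3*(n:ℝ) + 6)]
          _ ≤ ((n:ℝ) - 3) ^ (Real.logb 2 3) := by
              apply Real.rpow_le_rpow_of_exponent_le (by linarith)
              linarith [b_lb]
    · -- 4 ≤ d
      have hd4' : 4 ≤ d := hd4
      rcases eq_or_lt_of_le hdn with hnd | hnd
      · -- n = d
        subst hnd
        rw [simplex d (by omega)]
        push_cast
        apply Real.rpow_nonneg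
        simp
      · -- d < n
        have hn1 : (1:ℝ) ≤ (n:ℝ) - d := by
          have : (d:ℕ) + 1 ≤ n := hnd
          have : ((d:ℕ):ℝ) + 1 ≤ (n:ℝ) := by exact_mod_cast this
          linarith
        have hd1pos : (0:ℝ) < (d:ℝ) - 1 := by
          have : (4:ℝ) ≤ (d:ℝ) := by exact_mod_cast hd4'
          linarith
        have c1 : ((n-1:ℕ):ℝ) = (n:ℝ) - 1 := by
          rw [Nat.cast_sub (by omega)]; norm_num
        have c2 : ((d-1:ℕ):ℝ) = (d:ℝ) - 1 := by
          rw [Nat.cast_sub (by omega)]; norm_num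
        have hexp : Real.logb 2 ((d:ℝ) - 1) ≤ Real.logb 2 (d:ℝ) :=
          Real.logb_le_logb_of_le one_lt_two hd1pos (by linarith)
        rcases Nat.lt_or_ge n (2*d) with hlow | hkk2
        · -- low case
          have h := low d n (by omega) (le_of_lt hnd) hlow
          have ihh := ih (n-1) (by omega) (d-1) (by omega) (by omega)
          calc (f d n : ℝ) ≤ (f (d-1) (n-1) : ℝ) := by exact_mod_cast h
            _ ≤ (((n-1:ℕ):ℝ) - ((d-1:ℕ):ℝ)) ^ (Real.logb 2 ((d-1:ℕ):ℝ)) := ihh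
            _ = ((n:ℝ) - d) ^ (Real.logb 2 ((d:ℝ) - 1)) := by
                rw [c1, c2]; ring_nf
            _ ≤ ((n:ℝ) - d) ^ (Real.logb 2 d) :=
                Real.rpow_le_rpow_of_exponent_le hn1 hexp
        · -- kk case
          set m : ℝ := (n:ℝ) - d with hm
          have hmd : (d:ℝ) ≤ m := by
            have : (2*d : ℕ) ≤ n := hkk2
            have : ((2*d : ℕ):ℝ) ≤ (n:ℝ) := by exact_mod_cast this
            push_cast at this
            rw [hm]; linarith
          have h := kk d n (by omega) hkk2
          have ih1 := ih (n-1) (by omega) (d-1) (by omega) (by omega)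
          have hdn2 : d ≤ n/2 := by omega
          have ih2 := ih (n/2) (by omega) d (by omega) hdn2
          have hL0 : (0:ℝ) ≤ Real.logb 2 (d:ℝ) :=
            Real.logb_nonneg one_lt_two (by linarith)
          -- middle term bound
          have hmid : (f d (n/2) : ℝ) ≤ ((m - d)/2) ^ (Real.logb 2 (d:ℝ)) := by
            have hcast : ((n/2:ℕ):ℝ) - d ≤ (m - d)/2 := by
              have hle : ((n/2:ℕ):ℝ) ≤ (n:ℝ)/2 := by
                have := (Nat.cast_div_le (m := n) (n := 2) : ((n/2:ℕ):ℝ) ≤ (n:ℝ)/(2:ℕ))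
                push_cast at this
                exact this
              rw [hm]; linarith
            have hnn : (0:ℝ) ≤ ((n/2:ℕ):ℝ) - d := by
              have : ((d:ℕ):ℝ) ≤ ((n/2:ℕ):ℝ) := by exact_mod_cast hdn2
              linarith
            calc (f d (n/2) : ℝ) ≤ (((n/2:ℕ):ℝ) - d) ^ (Real.logb 2 (d:ℝ)) := ih2
              _ ≤ ((m - d)/2) ^ (Real.logb 2 (d:ℝ)) :=
                  Real.rpow_le_rpow hnn hcast hL0
          have h1st : (f (d-1) (n-1) : ℝ) ≤ m ^ (Real.logb 2 ((d:ℝ) - 1)) := by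
            calc (f (d-1) (n-1) : ℝ)
                ≤ (((n-1:ℕ):ℝ) - ((d-1:ℕ):ℝ)) ^ (Real.logb 2 ((d-1:ℕ):ℝ)) := ih1
              _ = m ^ (Real.logb 2 ((d:ℝ) - 1)) := by
                  rw [c1, c2, hm]; ring_nf
          calc (f d n : ℝ) ≤ (f (d-1) (n-1) : ℝ) + 2*(f d (n/2) : ℝ) + 2 := by
                exact_mod_cast h
            _ ≤ m ^ (Real.logb 2 ((d:ℝ) - 1)) + 2*((m - d)/2) ^ (Real.logb 2 (d:ℝ)) + 2 := by
                linarith [h1st, hmid]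
            _ ≤ m ^ (Real.logb 2 (d:ℝ)) := Rstep d hd4' hmd
  intro d n hd hn
  exact key n d (by omega) (le_of_lt hn)
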